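/- Let 𝒴 be a separable Hilbert space with orthonormal basis (d_j)_{j∈J}, and let (e_i)_{i∈I} be measurable functions on a probability space (E, π) with Σ_{i∈I} μ_i^α e_i(x)² ≤ A² for π-almost all x, where μ_i > 0. Then every function F(x) = Σ_{i,j} b_{ij} d_j μ_i^{α/2} e_i(x) with Σ_{i,j} b_{ij}² ≤ 1 satisfies ‖F(x)‖_𝒴 ≤ A for π-almost all x. -/

import Mathlib

open MeasureTheory

/-- Cauchy–Schwarz for `tsum`s of real sequences. -/
lemma tsum_cs {P : Type*} (f g : P → ℝ) (hf : Summable fun p => f p ^ 2)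
    (hg : Summable fun p => g p ^ 2) :
    ∑' p, f p * g p ≤ Real.sqrt (∑' p, f p ^ 2) * Real.sqrt (∑' p, g p ^ 2) := by
  refine tsum_le_of_sum_le' (by positivity) fun s => ?_
  calc ∑ p ∈ s, f p * g p
      ≤ Real.sqrt (∑ p ∈ s, f p ^ 2) * Real.sqrt (∑ p ∈ s, g p ^ 2) :=
        Real.sum_mul_le_sqrt_mul_sqrt s f g
    _ ≤ Real.sqrt (∑' p, f p ^ 2) * Real.sqrt (∑' p, g p ^ 2) :=
        mul_le_mul
          (Real.sqrt_le_sqrt (Summable.sum_le_tsum s (fun _ _ => sq_nonneg _) hf))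
          (Real.sqrt_le_sqrt (Summable.sum_le_tsum s (fun _ _ => sq_nonneg _) hg))
          (Real.sqrt_nonneg _) (Real.sqrt_nonneg _)

theorem stmt9 {E Y ι κ : Type*} [MeasurableSpace E]
    [NormedAddCommGroup Y] [InnerProductSpace ℝ Y] [CompleteSpace Y]
    (π : Measure E) [IsProbabilityMeasure π]
    (d : HilbertBasis κ ℝ Y)
    (μ : ι → ℝ) (hμ : ∀ i, 0 < μ i)
    (e : ι → E → ℝ) (hmeas : ∀ i, Measurable (e i))
    (α A : ℝ) (hA : 0 ≤ A)
    (hbound : ∀ᵐ x ∂π, Summable (fun i => (μ i) ^ α * (e i x) ^ 2) ∧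
      ∑' i, (μ i) ^ α * (e i x) ^ 2 ≤ A ^ 2)
    (b : ι × κ → ℝ) (hb : Summable (fun p => (b p) ^ 2)) (hb1 : ∑' p, (b p) ^ 2 ≤ 1)
    (F : E → Y)
    (hF : ∀ᵐ x ∂π,
      HasSum (fun p : ι × κ => (b p * (μ p.1) ^ (α / 2) * e p.1 x) • d p.2) (F x)) :
    ∀ᵐ x ∂π, ‖F x‖ ≤ A := by
  filter_upwards [hbound, hF] with x hbx hFx
  obtain ⟨hS, hSle⟩ := hbx
  set g : κ → ℝ := fun j => inner ℝ (F x) (d j) with hg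
  set h : ι × κ → ℝ := fun p => (μ p.1) ^ (α / 2) * e p.1 x * g p.2 with hh
  -- square of h
  have hsq : ∀ p : ι × κ, h p ^ 2 = ((μ p.1) ^ α * (e p.1 x) ^ 2) * (g p.2) ^ 2 := by
    intro p
    have : ((μ p.1) ^ (α / 2)) ^ 2 = (μ p.1) ^ α := by
      rw [← Real.rpow_natCast ((μ p.1) ^ (α / 2)) 2, ← Real.rpow_mul (hμ p.1).le]
      norm_num
    simp only [hh]
    rw [mul_pow, mul_pow, this]
  -- Parseval for g
  have hT : HasSum (fun j => g j ^ 2) (‖F x‖ ^ 2) := by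
    have := d.hasSum_inner_mul_inner (F x) (F x)
    simpa [hg, real_inner_self_eq_norm_sq, real_inner_comm (F x), sq] using this
  -- summability of h^2
  have hh2 : Summable fun p : ι × κ => h p ^ 2 := by
    have := (hS.mul_of_nonneg hT.summable
      (fun i => mul_nonneg (Real.rpow_nonneg (hμ i).le α) (sq_nonneg _))
      (fun j => sq_nonneg _))
    exact this.congr fun p => (hsq p).symm
  -- tsum of h^2 is bounded
  have hh2le : ∑' p : ι × κ, h p ^ 2 ≤ A ^ 2 * ‖F x‖ ^ 2 := by
    have := Summable.tsum_mul_tsum hS hT.summable (hh2.congr fun p => hsq p)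
    calc ∑' p : ι × κ, h p ^ 2
        = ∑' p : ι × κ, ((μ p.1) ^ α * (e p.1 x) ^ 2) * (g p.2) ^ 2 :=
          tsum_congr fun p => hsq p
      _ = (∑' i, (μ i) ^ α * (e i x) ^ 2) * (∑' j, g j ^ 2) := this.symm
      _ ≤ A ^ 2 * ‖F x‖ ^ 2 := by
          rw [hT.tsum_eq]
          exact mul_le_mul_of_nonneg_right hSle (by positivity)
  -- the key HasSum identity
  have h1 : HasSum (fun p : ι × κ => b p * h p) (‖F x‖ ^ 2) := by
    have := (innerSL ℝ (F x)).hasSum hFx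
    simp only [innerSL_apply_apply, real_inner_smul_right, real_inner_self_eq_norm_sq] at this
    refine this.congr_fun fun p => ?_
    simp only [hh, hg]
    ring
  -- Cauchy-Schwarz
  have key : ‖F x‖ ^ 2 ≤ Real.sqrt (∑' p, b p ^ 2) * Real.sqrt (∑' p, h p ^ 2) := by
    rw [← h1.tsum_eq]
    exact tsum_cs b h hb hh2
  have h2 : Real.sqrt (∑' p, b p ^ 2) ≤ 1 := by
    rw [show (1 : ℝ) = Real.sqrt 1 by simp]
    exact Real.sqrt_le_sqrt hb1
  have h3 : Real.sqrt (∑' p : ι × κ, h p ^ 2) ≤ A * ‖F x‖ := by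
    calc Real.sqrt (∑' p : ι × κ, h p ^ 2) ≤ Real.sqrt (A ^ 2 * ‖F x‖ ^ 2) :=
          Real.sqrt_le_sqrt hh2le
      _ = A * ‖F x‖ := by
          rw [show A ^ 2 * ‖F x‖ ^ 2 = (A * ‖F x‖) ^ 2 by ring]
          exact Real.sqrt_sq (by positivity)
  have hfin : ‖F x‖ ^ 2 ≤ A * ‖F x‖ := by
    calc ‖F x‖ ^ 2 ≤ Real.sqrt (∑' p, b p ^ 2) * Real.sqrt (∑' p, h p ^ 2) := key
      _ ≤ 1 * (A * ‖F x‖) := mul_le_mul h2 h3 (Real.sqrt_nonneg _)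
          (by linarith)
      _ = A * ‖F x‖ := one_mul _
  nlinarith [norm_nonneg (F x)]
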